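/- Let ν ∈ {0, −1, −2} and m = 4 + ν. Let ζ be an 8×m complex matrix with orthonormal columns (ζ†ζ = I_m), let P = ζζ†, write ζ₊ for the first 4 rows of ζ and ζ₋ for the last 4 rows, let D be the 8×8 block-diagonal Hermitian matrix with blocks ζ₊ζ₊† and ζ₋ζ₋†, and let λ₁, …, λ₈ be the eigenvalues of D. Group the indices 1,…,8 into the four consecutive pairs (1,2), (3,4), (5,6), (7,8). Then the two conditions (a) Σ_{i=1}^{8} max(λ_i − 1/2, 0) = m/2 and (b) Σ_{j=1}^{4} (P_{2j−1,2j−1} − P_{2j,2j})² = m hold simultaneously if and only if P is a diagonal matrix whose diagonal entries all equal 0 or 1, exactly m diagonal entries equal 1, and for each pair j not both entries P_{2j−1,2j−1} and P_{2j,2j} equal 1. -/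

import Mathlib

open Matrix

/-- Embedding of the first four (valley `+`) indices into `Fin 8`. -/
def loIdx (i : Fin 4) : Fin 8 := ⟨i.val, by have := i.isLt; omega⟩

/-- Embedding of the last four (valley `-`) indices into `Fin 8`. -/
def hiIdx (i : Fin 4) : Fin 8 := ⟨4 + i.val, by have := i.isLt; omega⟩

/-- The first member `2j` of the `j`-th consecutive index pair in `Fin 8`. -/
def pairA (j : Fin 4) : Fin 8 := ⟨2 * j.val, by have := j.isLt; omega⟩

/-- The second member `2j+1` of the `j`-th consecutive index pair in `Fin 8`. -/
def pairB (j : Fin 4) : Fin 8 := ⟨2 * j.val + 1, by have := j.isLt; omega⟩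


lemma pairA_0 : pairA 0 = 0 := rfl
lemma pairA_1 : pairA 1 = 2 := rfl
lemma pairA_2 : pairA 2 = 4 := rfl
lemma pairA_3 : pairA 3 = 6 := rfl
lemma pairB_0 : pairB 0 = 1 := rfl
lemma pairB_1 : pairB 1 = 3 := rfl
lemma pairB_2 : pairB 2 = 5 := rfl
lemma pairB_3 : pairB 3 = 7 := rfl
lemma loIdx_0 : loIdx 0 = 0 := rfl
lemma loIdx_1 : loIdx 1 = 1 := rfl
lemma loIdx_2 : loIdx 2 = 2 := rfl
lemma loIdx_3 : loIdx 3 = 3 := rfl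
lemma hiIdx_0 : hiIdx 0 = 4 := rfl
lemma hiIdx_1 : hiIdx 1 = 5 := rfl
lemma hiIdx_2 : hiIdx 2 = 6 := rfl
lemma hiIdx_3 : hiIdx 3 = 7 := rfl

lemma pair_eq_aux {a b : ℝ} (ha0 : 0 ≤ a) (ha1 : a ≤ 1) (hb0 : 0 ≤ b) (hb1 : b ≤ 1)
    (h : (a - b) ^ 2 = a + b) :
    (a = 0 ∨ a = 1) ∧ (b = 0 ∨ b = 1) ∧ a * b = 0 := by
  have h1 : a * (1 - a) = 0 := by
    nlinarith [mul_nonneg hb0 (sub_nonneg.2 hb1), mul_nonneg ha0 hb0]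
  have h2 : b * (1 - b) = 0 := by
    nlinarith [mul_nonneg ha0 (sub_nonneg.2 ha1), mul_nonneg ha0 hb0]
  have h3 : a * b = 0 := by
    nlinarith [mul_nonneg ha0 (sub_nonneg.2 ha1), mul_nonneg hb0 (sub_nonneg.2 hb1)]
  refine ⟨?_, ?_, h3⟩
  · rcases mul_eq_zero.1 h1 with h | h
    · exact Or.inl h
    · exact Or.inr (by linarith)
  · rcases mul_eq_zero.1 h2 with h | h
    · exact Or.inl h
    · exact Or.inr (by linarith)

lemma sum_pairs (f : Fin 8 → ℝ) :
    ∑ j : Fin 4, (f (pairA j) + f (pairB j)) = ∑ i : Fin 8, f i := by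
  simp only [Fin.sum_univ_four, Fin.sum_univ_eight, pairA_0, pairA_1, pairA_2, pairA_3,
    pairB_0, pairB_1, pairB_2, pairB_3]
  ring

lemma sum_lohi (f : Fin 8 → ℂ) :
    ∑ a : Fin 4, f (loIdx a) + ∑ a : Fin 4, f (hiIdx a) = ∑ i : Fin 8, f i := by
  simp only [Fin.sum_univ_four, Fin.sum_univ_eight, loIdx_0, loIdx_1, loIdx_2, loIdx_3,
    hiIdx_0, hiIdx_1, hiIdx_2, hiIdx_3]
  ring

lemma cover (i : Fin 8) : ∃ j : Fin 4, i = pairA j ∨ i = pairB j := by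
  fin_cases i
  · exact ⟨0, Or.inl rfl⟩
  · exact ⟨0, Or.inr rfl⟩
  · exact ⟨1, Or.inl rfl⟩
  · exact ⟨1, Or.inr rfl⟩
  · exact ⟨2, Or.inl rfl⟩
  · exact ⟨2, Or.inr rfl⟩
  · exact ⟨3, Or.inl rfl⟩
  · exact ⟨3, Or.inr rfl⟩

lemma loIdx_inj : Function.Injective loIdx := by
  intro a b h
  have := congrArg Fin.val h
  simp only [loIdx] at this
  exact Fin.ext this

lemma hiIdx_inj : Function.Injective hiIdx := by
  intro a b h
  have := congrArg Fin.val h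
  simp only [hiIdx] at this
  exact Fin.ext (by omega)


/-- For filling `ν ∈ {0, -1, -2}` and `m = 4 + ν`, with `ζ` an `8 × m` complex matrix
with orthonormal columns, `P = ζ ζᴴ`, `ζ₊`/`ζ₋` the first/last four rows of `ζ`,
`D = fromBlocks (ζ₊ζ₊ᴴ) 0 0 (ζ₋ζ₋ᴴ)` Hermitian with eigenvalues `λ i`:
the conditions `∑ i, max (λ i - 1/2) 0 = m/2` and
`∑ j (P_{2j-1,2j-1} - P_{2j,2j})² = m` hold simultaneously if and only if `P` is
diagonal with all diagonal entries `0` or `1`, exactly `m` diagonal entries equal to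
`1`, and no consecutive pair of diagonal entries both equal to `1`. -/
theorem stmt16 (ν : ℤ) (hν : ν = 0 ∨ ν = -1 ∨ ν = -2)
    (m : ℕ) (hm : (m : ℤ) = 4 + ν)
    (ζ : Matrix (Fin 8) (Fin m) ℂ) (hζ : ζᴴ * ζ = 1)
    (hD : (Matrix.fromBlocks
        ((ζ.submatrix loIdx id) * (ζ.submatrix loIdx id)ᴴ) 0 0
        ((ζ.submatrix hiIdx id) * (ζ.submatrix hiIdx id)ᴴ)).IsHermitian) :
    ((∑ i, max (hD.eigenvalues i - 1 / 2) 0 = (m : ℝ) / 2) ∧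
     (∑ j : Fin 4,
        (((ζ * ζᴴ) (pairA j) (pairA j)).re - ((ζ * ζᴴ) (pairB j) (pairB j)).re) ^ 2
          = (m : ℝ)))
    ↔
    ((∀ i j, i ≠ j → (ζ * ζᴴ) i j = 0) ∧
     (∀ i, (ζ * ζᴴ) i i = 0 ∨ (ζ * ζᴴ) i i = 1) ∧
     Set.ncard {i : Fin 8 | (ζ * ζᴴ) i i = 1} = m ∧
     (∀ j : Fin 4,
        ¬((ζ * ζᴴ) (pairA j) (pairA j) = 1 ∧ (ζ * ζᴴ) (pairB j) (pairB j) = 1))) := by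
  classical
  set P : Matrix (Fin 8) (Fin 8) ℂ := ζ * ζᴴ with hPdef
  have hPP : P * P = P := by
    rw [hPdef, Matrix.mul_assoc, ← Matrix.mul_assoc ζᴴ ζ ζᴴ, hζ, Matrix.one_mul]
  have hPH : Pᴴ = P := by
    rw [hPdef, conjTranspose_mul, conjTranspose_conjTranspose]
  set p : Fin 8 → ℝ := fun i => (P i i).re with hpdef
  have hPreal : ∀ i, P i i = (p i : ℂ) := by
    intro i
    have h := congrFun (congrFun hPH i) i
    rw [conjTranspose_apply] at h
    exact (Complex.conj_eq_iff_re.1 h).symm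
  have hp0 : ∀ i, 0 ≤ p i := by
    intro i
    have hPii : P i i = ((∑ k, Complex.normSq (ζ i k) : ℝ) : ℂ) := by
      simp [hPdef, Matrix.mul_apply, Matrix.conjTranspose_apply, Complex.mul_conj,
        Complex.ofReal_sum]
    have : p i = ∑ k, Complex.normSq (ζ i k) := by
      rw [hpdef]; simp only [hPii, Complex.ofReal_re]
    rw [this]
    exact Finset.sum_nonneg fun k _ => Complex.normSq_nonneg _
  have hrow : ∀ i, ∑ k, Complex.normSq (P i k) = p i := by
    intro i
    have h1 : P i i = ((∑ k, Complex.normSq (P i k) : ℝ) : ℂ) := by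
      conv_lhs => rw [← hPP]
      rw [Matrix.mul_apply, Complex.ofReal_sum]
      refine Finset.sum_congr rfl fun k _ => ?_
      have hsym : P k i = star (P i k) := by
        have := congrFun (congrFun hPH k) i
        rw [conjTranspose_apply] at this
        exact this.symm
      rw [hsym]
      exact Complex.mul_conj _
    have := congrArg Complex.re h1
    simp only [Complex.ofReal_re] at this
    rw [hpdef]
    exact this.symm
  have hple : ∀ i, p i ≤ 1 := by
    intro i
    have hks : Complex.normSq (P i i) ≤ ∑ k, Complex.normSq (P i k) :=
      Finset.single_le_sum (fun k _ => Complex.normSq_nonneg (P i k)) (Finset.mem_univ i)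
    have hsq : Complex.normSq (P i i) = p i ^ 2 := by
      rw [hPreal i, Complex.normSq_ofReal]; ring
    have := hrow i
    nlinarith [hp0 i]
  have htrP : P.trace = (m : ℂ) := by
    rw [hPdef, Matrix.trace_mul_comm, hζ, Matrix.trace_one]
    simp
  have htr : ∑ i, p i = (m : ℝ) := by
    have h2 : P.trace = ((∑ i, p i : ℝ) : ℂ) := by
      rw [Matrix.trace, Complex.ofReal_sum]
      exact Finset.sum_congr rfl fun i _ => hPreal i
    have := h2.symm.trans htrP
    exact_mod_cast this
  constructor
  · rintro ⟨-, hb⟩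
    have hb' : ∑ j : Fin 4, (p (pairA j) - p (pairB j)) ^ 2 = (m : ℝ) := hb
    have hsum2 : ∑ j : Fin 4, (p (pairA j) + p (pairB j)) = (m : ℝ) := by
      rw [sum_pairs]; exact htr
    have hle : ∀ j ∈ Finset.univ, (p (pairA j) - p (pairB j)) ^ 2
        ≤ p (pairA j) + p (pairB j) := by
      intro j _
      nlinarith [hp0 (pairA j), hp0 (pairB j), hple (pairA j), hple (pairB j)]
    have heq : ∀ j ∈ (Finset.univ : Finset (Fin 4)),
        (p (pairA j) - p (pairB j)) ^ 2 = p (pairA j) + p (pairB j) :=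
      (Finset.sum_eq_sum_iff_of_le hle).1 (hb'.trans hsum2.symm)
    have hpairf : ∀ j : Fin 4, (p (pairA j) = 0 ∨ p (pairA j) = 1) ∧
        (p (pairB j) = 0 ∨ p (pairB j) = 1) ∧ p (pairA j) * p (pairB j) = 0 := by
      intro j
      exact pair_eq_aux (hp0 _) (hple _) (hp0 _) (hple _) (heq j (Finset.mem_univ j))
    have hall : ∀ i, p i = 0 ∨ p i = 1 := by
      intro i
      obtain ⟨j, hj | hj⟩ := cover i
      · rw [hj]; exact (hpairf j).1
      · rw [hj]; exact (hpairf j).2.1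
    have hPdiag01 : ∀ i, P i i = 0 ∨ P i i = 1 := by
      intro i
      rcases hall i with h | h
      · left; rw [hPreal i, h]; simp
      · right; rw [hPreal i, h]; simp
    have hoff : ∀ i j, i ≠ j → P i j = 0 := by
      intro i j hij
      have h1 := hrow i
      rw [← Finset.add_sum_erase _ _ (Finset.mem_univ i)] at h1
      have h2 : Complex.normSq (P i i) = p i := by
        rcases hall i with h | h <;> simp [hPreal i, h]
      have hzero : ∑ k ∈ Finset.univ.erase i, Complex.normSq (P i k) = 0 := by
        have hpp : p i ^ 2 = p i := by rcases hall i with h | h <;> rw [h] <;> ring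
        have h2' : Complex.normSq (P i i) = p i := h2
        linarith
      have hmem : j ∈ Finset.univ.erase i :=
        Finset.mem_erase.2 ⟨Ne.symm hij, Finset.mem_univ j⟩
      have hle2 : Complex.normSq (P i j) ≤ 0 := by
        calc Complex.normSq (P i j)
            ≤ ∑ k ∈ Finset.univ.erase i, Complex.normSq (P i k) :=
              Finset.single_le_sum (fun k _ => Complex.normSq_nonneg (P i k)) hmem
          _ = 0 := hzero
      exact Complex.normSq_eq_zero.1 (le_antisymm hle2 (Complex.normSq_nonneg _))
    refine ⟨hoff, hPdiag01, ?_, ?_⟩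
    · have hsetf : {i : Fin 8 | P i i = 1}
          = ↑(Finset.univ.filter fun i : Fin 8 => P i i = 1) := by
        ext i; simp
      have h1 : ∑ i, p i = ∑ i : Fin 8, (if P i i = 1 then (1 : ℝ) else 0) := by
        refine Finset.sum_congr rfl fun i _ => ?_
        rcases hPdiag01 i with h | h
        · rw [if_neg (by rw [h]; exact zero_ne_one)]
          simp [hpdef, h]
        · rw [if_pos h]
          simp [hpdef, h]
      rw [htr, Finset.sum_boole] at h1
      rw [hsetf, Set.ncard_coe_finset]
      exact_mod_cast h1.symm
    · intro j ⟨hA, hB⟩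
      have h1 : p (pairA j) = 1 := by simp [hpdef, hA]
      have h2 : p (pairB j) = 1 := by simp [hpdef, hB]
      have := (hpairf j).2.2
      rw [h1, h2] at this
      norm_num at this
  · rintro ⟨hoff, h01, -, hpair⟩
    have hp01 : ∀ i, p i = 0 ∨ p i = 1 := by
      intro i
      rcases h01 i with h | h
      · left; simp [hpdef, h]
      · right; simp [hpdef, h]
    constructor
    · -- condition (a)
      have hentryA : ∀ a b : Fin 4,
          ((ζ.submatrix loIdx id) * (ζ.submatrix loIdx id)ᴴ) a b = P (loIdx a) (loIdx b) := by
        intro a b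
        simp [Matrix.mul_apply, Matrix.conjTranspose_apply, Matrix.submatrix_apply, hPdef]
      have hentryB : ∀ a b : Fin 4,
          ((ζ.submatrix hiIdx id) * (ζ.submatrix hiIdx id)ᴴ) a b = P (hiIdx a) (hiIdx b) := by
        intro a b
        simp [Matrix.mul_apply, Matrix.conjTranspose_apply, Matrix.submatrix_apply, hPdef]
      have hblockA : (ζ.submatrix loIdx id) * (ζ.submatrix loIdx id)ᴴ
          = Matrix.diagonal (fun a => P (loIdx a) (loIdx a)) := by
        ext a b
        rw [hentryA]
        by_cases hab : a = b
        · subst hab; simp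
        · rw [Matrix.diagonal_apply_ne _ hab]
          exact hoff _ _ (fun h => hab (loIdx_inj h))
      have hblockB : (ζ.submatrix hiIdx id) * (ζ.submatrix hiIdx id)ᴴ
          = Matrix.diagonal (fun a => P (hiIdx a) (hiIdx a)) := by
        ext a b
        rw [hentryB]
        by_cases hab : a = b
        · subst hab; simp
        · rw [Matrix.diagonal_apply_ne _ hab]
          exact hoff _ _ (fun h => hab (hiIdx_inj h))
      set M := Matrix.fromBlocks
        ((ζ.submatrix loIdx id) * (ζ.submatrix loIdx id)ᴴ) 0 0
        ((ζ.submatrix hiIdx id) * (ζ.submatrix hiIdx id)ᴴ) with hMdef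
      have hM : M = Matrix.diagonal (Sum.elim (fun a => P (loIdx a) (loIdx a))
          (fun a => P (hiIdx a) (hiIdx a))) := by
        rw [hMdef, hblockA, hblockB, Matrix.fromBlocks_diagonal]
      have hMM : M * M = M := by
        rw [hM, Matrix.diagonal_mul_diagonal]
        refine congrArg Matrix.diagonal (funext fun i => ?_)
        have h : Sum.elim (fun a => P (loIdx a) (loIdx a))
            (fun a => P (hiIdx a) (hiIdx a)) i = 0 ∨
            Sum.elim (fun a => P (loIdx a) (loIdx a))
            (fun a => P (hiIdx a) (hiIdx a)) i = 1 := by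
          cases i with
          | inl a => exact h01 (loIdx a)
          | inr a => exact h01 (hiIdx a)
        rcases h with h | h <;> simp only [Pi.mul_apply, h] <;> ring
      have heig01 : ∀ i, hD.eigenvalues i = 0 ∨ hD.eigenvalues i = 1 := by
        intro i
        have hv := hD.mulVec_eigenvectorBasis i
        have hv2 : M *ᵥ (M *ᵥ ⇑(hD.eigenvectorBasis i))
            = (hD.eigenvalues i * hD.eigenvalues i) • ⇑(hD.eigenvectorBasis i) := by
          rw [hv, Matrix.mulVec_smul, hv, smul_smul]
        rw [Matrix.mulVec_mulVec, hMM, hv] at hv2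
        have hvne : ⇑(hD.eigenvectorBasis i) ≠ 0 := by
          simpa using hD.eigenvectorBasis.orthonormal.ne_zero i
        have hz : (hD.eigenvalues i * hD.eigenvalues i - hD.eigenvalues i)
            • ⇑(hD.eigenvectorBasis i) = 0 := by
          rw [sub_smul, hv2, sub_self]
        rcases smul_eq_zero.1 hz with h | h
        · have : hD.eigenvalues i * (hD.eigenvalues i - 1) = 0 := by ring_nf; linarith [h]
          rcases mul_eq_zero.1 this with h' | h'
          · exact Or.inl h'
          · exact Or.inr (by linarith)
        · exact absurd h hvne
      have hPtr' : ∑ i : Fin 8, P i i = (m : ℂ) := by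
        rw [← htrP]; simp [Matrix.trace, Matrix.diag]
      have htrM : M.trace = (m : ℂ) := by
        have h1 : M.trace = ∑ a : Fin 4, (fun i => P i i) (loIdx a)
            + ∑ a : Fin 4, (fun i => P i i) (hiIdx a) := by
          rw [Matrix.trace, Fintype.sum_sum_type]
          have e1 : ∀ a : Fin 4, M.diag (Sum.inl a) = P (loIdx a) (loIdx a) := by
            intro a
            show M (Sum.inl a) (Sum.inl a) = _
            rw [hMdef, Matrix.fromBlocks_apply₁₁]
            exact hentryA a a
          have e2 : ∀ a : Fin 4, M.diag (Sum.inr a) = P (hiIdx a) (hiIdx a) := by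
            intro a
            show M (Sum.inr a) (Sum.inr a) = _
            rw [hMdef, Matrix.fromBlocks_apply₂₂]
            exact hentryB a a
          rw [Finset.sum_congr rfl fun a _ => e1 a, Finset.sum_congr rfl fun a _ => e2 a]
        rw [h1, sum_lohi (fun i => P i i)]
        exact hPtr'
      have hsumeig : ∑ i, hD.eigenvalues i = (m : ℝ) := by
        have h1 : M.trace = ∑ i, (hD.eigenvalues i : ℂ) := by
          nth_rewrite 1 [hD.spectral_theorem]
          rw [Unitary.conjStarAlgAut_apply, Matrix.trace_mul_cycle,
            Matrix.mem_unitaryGroup_iff'.mp (hD.eigenvectorUnitary).2, Matrix.one_mul,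
            Matrix.trace_diagonal]
          rfl
        have h2 : ((∑ i, hD.eigenvalues i : ℝ) : ℂ) = (m : ℂ) := by
          rw [Complex.ofReal_sum, ← h1, htrM]
        exact_mod_cast h2
      have : ∑ i, max (hD.eigenvalues i - 1 / 2) 0 = ∑ i, hD.eigenvalues i / 2 := by
        refine Finset.sum_congr rfl fun i _ => ?_
        rcases heig01 i with h | h <;> rw [h] <;> norm_num
      rw [this, ← Finset.sum_div, hsumeig]
    · -- condition (b)
      have hb' : ∑ j : Fin 4, (p (pairA j) - p (pairB j)) ^ 2
          = ∑ j : Fin 4, (p (pairA j) + p (pairB j)) := by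
        refine Finset.sum_congr rfl fun j _ => ?_
        have hnot : ¬(p (pairA j) = 1 ∧ p (pairB j) = 1) := by
          rintro ⟨h1, h2⟩
          exact hpair j ⟨by rw [hPreal, h1]; norm_num, by rw [hPreal, h2]; norm_num⟩
        rcases hp01 (pairA j) with h1 | h1 <;> rcases hp01 (pairB j) with h2 | h2 <;>
          rw [h1, h2] <;> norm_num
        exact hnot ⟨h1, h2⟩
      show ∑ j : Fin 4, (p (pairA j) - p (pairB j)) ^ 2 = (m : ℝ)
      rw [hb', sum_pairs]
      exact htr
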